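/- Let n, p ≥ 1 and C ≥ 1 be integers, L ≥ μ > 0, and 0 < η < 1/(nL). Let f_1, …, f_n : ℝ^p → ℝ be differentiable with L-Lipschitz gradients such that f = (1/n)∑_{i=1}^n f_i is μ-strongly convex, and let x* be the minimizer of f (so ∇f(x*) = 0). Let A be a row-stochastic n×n matrix and φ, φ⁺ stochastic vectors in ℝ^n with φᵀ = (φ⁺)ᵀ A. Let v ∈ ℝ^n with 1/n^{nC} ≤ v_i ≤ 1 for all i. Let x, y, s̃ ∈ (ℝ^p)^n satisfy: (i) ∑_{j=1}^n y^j = ∑_{j=1}^n ∇f_j(x^j), and (ii) y^i − v_i ∑_{j=1}^n y^j = v_i s̃^i for all i. Define x⁺ ∈ (ℝ^p)^n by (x⁺)^i = ∑_{j=1}^n A_{ij} x^j − η y^i, and set x̄ = ∑_i φ_i x^i, x̄⁺ = ∑_i φ⁺_i (x⁺)^i, x̃ = (x^i − x̄)_i, r = (x̄−x*,…,x̄−x*), r⁺ = (x̄⁺−x*,…,x̄⁺−x*). Then ‖r⁺‖ ≤ η nL ‖x̃‖ + (1 − ημ/n^{nC−1}) ‖r‖ + η√n ‖s̃‖. -/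

import Mathlib

open Matrix

section Aux
open InnerProductSpace
variable {E : Type*} [NormedAddCommGroup E] [InnerProductSpace ℝ E] [CompleteSpace E]

lemma dirHasDerivAt (F : E → ℝ) (hF : Differentiable ℝ F) (z u : E) (t : ℝ) :
    HasDerivAt (fun s : ℝ => F (z + s • u)) (inner ℝ (gradient F (z + t • u)) u : ℝ) t := by
  have h1 : HasDerivAt (fun s : ℝ => z + s • u) u t := by
    simpa using ((hasDerivAt_id t).smul_const u).const_add z
  have h2 := (hF (z + t • u)).hasGradientAt.hasFDerivAt
  have h3 := h2.comp_hasDerivAt t h1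
  rw [InnerProductSpace.toDual_apply_apply] at h3
  exact h3

lemma descentLemma (F : E → ℝ) (hF : Differentiable ℝ F) (L : ℝ)
    (hlip : ∀ z w, ‖gradient F z - gradient F w‖ ≤ L * ‖z - w‖) (z w : E) :
    F w ≤ F z + (inner ℝ (gradient F z) (w - z) : ℝ) + L / 2 * ‖w - z‖ ^ 2 := by
  set u := w - z with hu
  set g : ℝ → ℝ := fun t => F (z + t • u) - t * (inner ℝ (gradient F z) u : ℝ)
    - L / 2 * t ^ 2 * ‖u‖ ^ 2 with hg
  have hd : ∀ t : ℝ, HasDerivAt g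
      ((inner ℝ (gradient F (z + t • u)) u : ℝ) - (inner ℝ (gradient F z) u : ℝ)
        - L * t * ‖u‖ ^ 2) t := by
    intro t
    have h1 := dirHasDerivAt F hF z u t
    have h2 : HasDerivAt (fun t : ℝ => t * (inner ℝ (gradient F z) u : ℝ))
        (inner ℝ (gradient F z) u : ℝ) t := by
      simpa using (hasDerivAt_id t).mul_const (inner ℝ (gradient F z) u : ℝ)
    have h3 : HasDerivAt (fun t : ℝ => L / 2 * t ^ 2 * ‖u‖ ^ 2)
        (L * t * ‖u‖ ^ 2) t := by
      have := ((hasDerivAt_pow 2 t).const_mul (L / 2)).mul_const (‖u‖ ^ 2)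
      exact this.congr_deriv (by ring)
    exact (h1.sub h2).sub h3
  have hanti : AntitoneOn g (Set.Icc 0 1) := by
    apply antitoneOn_of_deriv_nonpos (convex_Icc 0 1)
    · exact fun t _ => (hd t).continuousAt.continuousWithinAt
    · exact fun t _ => (hd t).differentiableAt.differentiableWithinAt
    · intro t ht
      rw [interior_Icc] at ht
      rw [(hd t).deriv]
      have hb : (inner ℝ (gradient F (z + t • u)) u : ℝ) - (inner ℝ (gradient F z) u : ℝ)
          ≤ L * t * ‖u‖ ^ 2 := by
        have h1 : (inner ℝ (gradient F (z + t • u)) u : ℝ) - (inner ℝ (gradient F z) u : ℝ)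
            = (inner ℝ (gradient F (z + t • u) - gradient F z) u : ℝ) := by
          rw [inner_sub_left]
        rw [h1]
        calc (inner ℝ (gradient F (z + t • u) - gradient F z) u : ℝ)
            ≤ ‖gradient F (z + t • u) - gradient F z‖ * ‖u‖ := real_inner_le_norm _ _
          _ ≤ (L * ‖z + t • u - z‖) * ‖u‖ := by
              apply mul_le_mul_of_nonneg_right (hlip _ _) (norm_nonneg _)
          _ = L * t * ‖u‖ ^ 2 := by
              rw [add_sub_cancel_left, norm_smul, Real.norm_eq_abs,
                abs_of_pos ht.1]
              ring
      linarith
  have h01 := hanti (Set.left_mem_Icc.2 zero_le_one) (Set.right_mem_Icc.2 zero_le_one)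
    zero_le_one
  simp only [hg] at h01
  simp only [zero_smul, add_zero, one_smul, zero_mul, sub_zero, one_pow, mul_one] at h01
  have : z + u = w := by rw [hu]; abel
  rw [this] at h01
  nlinarith [h01]

lemma keyCocoercive (g : E → ℝ) (gr : E → E) (K : ℝ) (hK : 0 < K)
    (hconv : ∀ z w, g z + (inner ℝ (gr z) (w - z) : ℝ) ≤ g w)
    (hdesc : ∀ z w, g w ≤ g z + (inner ℝ (gr z) (w - z) : ℝ) + K / 2 * ‖w - z‖ ^ 2)
    (z w : E) :
    ‖gr w - gr z‖ ^ 2 ≤ K * (inner ℝ (gr w - gr z) (w - z) : ℝ) := by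
  have main : ∀ a b : E, g a + (inner ℝ (gr a) (b - a) : ℝ) + (2 * K)⁻¹ * ‖gr b - gr a‖ ^ 2
      ≤ g b := by
    intro a b
    set d := gr b - gr a with hd
    set u := b - K⁻¹ • d with hu
    have h1 := hdesc b u
    have h2 := hconv a u
    have e1 : u - b = -(K⁻¹ • d) := by rw [hu]; abel
    have e2 : (inner ℝ (gr b) (u - b) : ℝ) = -(K⁻¹ * (inner ℝ (gr b) d : ℝ)) := by
      rw [e1, inner_neg_right, real_inner_smul_right]
    have e3 : ‖u - b‖ ^ 2 = K⁻¹ ^ 2 * ‖d‖ ^ 2 := by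
      rw [e1, norm_neg, norm_smul, mul_pow, Real.norm_eq_abs, sq_abs]
    have e4 : (inner ℝ (gr a) (u - a) : ℝ)
        = (inner ℝ (gr a) (b - a) : ℝ) - K⁻¹ * (inner ℝ (gr a) d : ℝ) := by
      have : u - a = (b - a) - K⁻¹ • d := by rw [hu]; abel
      rw [this, inner_sub_right, real_inner_smul_right]
    rw [e2, e3] at h1
    rw [e4] at h2
    have e5 : (inner ℝ (gr b) d : ℝ) - (inner ℝ (gr a) d : ℝ) = ‖d‖ ^ 2 := by
      rw [← inner_sub_left, ← hd, real_inner_self_eq_norm_sq]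
    have hK' : K ≠ 0 := ne_of_gt hK
    have f1 : K / 2 * (K⁻¹ ^ 2 * ‖d‖ ^ 2) = (2 * K)⁻¹ * ‖d‖ ^ 2 := by
      field_simp
    have f3 : K⁻¹ * (inner ℝ (gr b) d : ℝ) - K⁻¹ * (inner ℝ (gr a) d : ℝ)
        = K⁻¹ * ‖d‖ ^ 2 := by rw [← mul_sub, e5]
    have f2 : K⁻¹ * ‖d‖ ^ 2 = 2 * ((2 * K)⁻¹ * ‖d‖ ^ 2) := by
      field_simp
    rw [f1] at h1
    linarith [h1, h2, f3]
  have hA := main z w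
  have hB := main w z
  have e6 : ‖gr z - gr w‖ = ‖gr w - gr z‖ := norm_sub_rev _ _
  rw [e6] at hB
  have e7 : (inner ℝ (gr z) (w - z) : ℝ) + (inner ℝ (gr w) (z - w) : ℝ)
      = -(inner ℝ (gr w - gr z) (w - z) : ℝ) := by
    rw [inner_sub_left]
    have : (inner ℝ (gr w) (z - w) : ℝ) = -(inner ℝ (gr w) (w - z) : ℝ) := by
      rw [← inner_neg_right]; congr 1; abel
    rw [this]; ring
  have hK' : K ≠ 0 := ne_of_gt hK
  have f2 : K⁻¹ * ‖gr w - gr z‖ ^ 2 = 2 * ((2 * K)⁻¹ * ‖gr w - gr z‖ ^ 2) := by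
    field_simp
  have hsum : K⁻¹ * ‖gr w - gr z‖ ^ 2 ≤ (inner ℝ (gr w - gr z) (w - z) : ℝ) := by
    linarith [hA, hB, e7]
  have f4 : ‖gr w - gr z‖ ^ 2 = K * (K⁻¹ * ‖gr w - gr z‖ ^ 2) := by
    field_simp
  rw [f4]
  exact mul_le_mul_of_nonneg_left hsum hK.le

lemma contraction (F : E → ℝ) (hFd : Differentiable ℝ F) (L μ : ℝ)
    (hμ : 0 < μ) (hμL : μ ≤ L)
    (hlip : ∀ z w, ‖gradient F z - gradient F w‖ ≤ L * ‖z - w‖)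
    (hsc : ∀ z w : E, F w + (inner ℝ (gradient F w) (z - w) : ℝ) + μ / 2 * ‖z - w‖ ^ 2 ≤ F z)
    (xstar : E) (hstar : gradient F xstar = 0)
    (h : ℝ) (hh : 0 < h) (hhL : h * L < 1) (z : E) :
    ‖z - h • gradient F z - xstar‖ ≤ (1 - h * μ) * ‖z - xstar‖ := by
  have hL0 : 0 < L := lt_of_lt_of_le hμ hμL
  have hμh : h * μ < 1 := lt_of_le_of_lt (by nlinarith) hhL
  have hh' : h ≠ 0 := ne_of_gt hh
  obtain ⟨K, hKdef⟩ : ∃ K : ℝ, K = 2 / h - 2 * μ := ⟨_, rfl⟩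
  have hKh : h * K = 2 - 2 * h * μ := by
    have e : h * (2 / h) = 2 := by field_simp
    rw [hKdef, mul_sub, e]; ring
  have hK : 0 < K := by nlinarith
  have hLK : L ≤ K + μ := by
    have h2 : h * L ≤ h * (K + μ) := by nlinarith
    exact le_of_mul_le_mul_left h2 hh
  -- descent lemma with constant K + μ
  have descL2 : ∀ a b : E, F b ≤ F a + (inner ℝ (gradient F a) (b - a) : ℝ)
      + (K + μ) / 2 * ‖b - a‖ ^ 2 := by
    intro a b
    have h1 := descentLemma F hFd L hlip a b
    have hstep : L / 2 * ‖b - a‖ ^ 2 ≤ (K + μ) / 2 * ‖b - a‖ ^ 2 := by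
      have := mul_le_mul_of_nonneg_right hLK (sq_nonneg ‖b - a‖)
      linarith
    linarith [h1, hstep]
  -- shifted function
  obtain ⟨g, hgdef⟩ : ∃ g : E → ℝ, g = fun a => F a - μ / 2 * ‖a‖ ^ 2 := ⟨_, rfl⟩
  obtain ⟨gr, hgrdef⟩ : ∃ gr : E → E, gr = fun a => gradient F a - μ • a := ⟨_, rfl⟩
  have hident : ∀ a b : E, ‖b‖ ^ 2 = ‖a‖ ^ 2 + 2 * (inner ℝ a (b - a) : ℝ) + ‖b - a‖ ^ 2 := by
    intro a b
    have : b = a + (b - a) := by abel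
    calc ‖b‖ ^ 2 = ‖a + (b - a)‖ ^ 2 := by rw [← this]
      _ = ‖a‖ ^ 2 + 2 * (inner ℝ a (b - a) : ℝ) + ‖b - a‖ ^ 2 := by
          rw [norm_add_sq_real]
  have hinner : ∀ a b : E, (inner ℝ (gr a) (b - a) : ℝ)
      = (inner ℝ (gradient F a) (b - a) : ℝ) - μ * (inner ℝ a (b - a) : ℝ) := by
    intro a b
    simp only [hgrdef, inner_sub_left, real_inner_smul_left]
  have hconv : ∀ a b : E, g a + (inner ℝ (gr a) (b - a) : ℝ) ≤ g b := by
    intro a b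
    have h1 := hsc b a
    have h2 := hident a b
    have h3 := hinner a b
    have h4 : μ / 2 * ‖b‖ ^ 2 = μ / 2 * ‖a‖ ^ 2 + μ * (inner ℝ a (b - a) : ℝ)
        + μ / 2 * ‖b - a‖ ^ 2 := by linear_combination (μ / 2) * h2
    simp only [hgdef]
    rw [h3]
    linarith
  have hdesc : ∀ a b : E, g b ≤ g a + (inner ℝ (gr a) (b - a) : ℝ) + K / 2 * ‖b - a‖ ^ 2 := by
    intro a b
    have h1 := descL2 a b
    have h2 := hident a b
    have h3 := hinner a b
    have h4 : μ / 2 * ‖b‖ ^ 2 = μ / 2 * ‖a‖ ^ 2 + μ * (inner ℝ a (b - a) : ℝ)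
        + μ / 2 * ‖b - a‖ ^ 2 := by linear_combination (μ / 2) * h2
    simp only [hgdef]
    rw [h3]
    linarith
  have key := keyCocoercive g gr K hK hconv hdesc xstar z
  obtain ⟨G, hGdef⟩ : ∃ G : E, gradient F z = G := ⟨_, rfl⟩
  obtain ⟨D, hDdef⟩ : ∃ D : E, z - xstar = D := ⟨_, rfl⟩
  obtain ⟨P, hPdef⟩ : ∃ P : ℝ, (inner ℝ G D : ℝ) = P := ⟨_, rfl⟩
  have egr : gr z - gr xstar = G - μ • D := by
    have e : gr z - gr xstar = gradient F z - μ • (z - xstar) := by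
      rw [hgrdef]; simp only [hstar, smul_sub]; abel
    rw [e, hGdef, hDdef]
  rw [egr, hDdef] at key
  -- key : ‖G - μ • D‖ ^ 2 ≤ K * inner (G - μ • D) D
  have e1 : ‖G - μ • D‖ ^ 2 = ‖G‖ ^ 2 - 2 * μ * P + μ ^ 2 * ‖D‖ ^ 2 := by
    rw [norm_sub_sq_real, real_inner_smul_right, norm_smul, Real.norm_eq_abs,
      abs_of_pos hμ, mul_pow, hPdef]
    ring
  have e2 : (inner ℝ (G - μ • D) D : ℝ) = P - μ * ‖D‖ ^ 2 := by
    rw [inner_sub_left, real_inner_smul_left, real_inner_self_eq_norm_sq, hPdef]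
  rw [e1, e2] at key
  -- key : ‖G‖² - 2μP + μ²‖D‖² ≤ K*(P - μ‖D‖²)
  have IP2 : h * ‖G‖ ^ 2 + (2 * μ - h * μ ^ 2) * ‖D‖ ^ 2 ≤ 2 * P := by
    have hm := mul_le_mul_of_nonneg_left key hh.le
    nlinarith [hm, hKh]
  rw [hGdef]
  have goalvec : z - h • G - xstar = D - h • G := by rw [← hDdef]; abel
  rw [goalvec, hDdef]
  have e3 : ‖D - h • G‖ ^ 2 = ‖D‖ ^ 2 - 2 * h * P + h ^ 2 * ‖G‖ ^ 2 := by
    rw [norm_sub_sq_real, real_inner_smul_right, norm_smul, Real.norm_eq_abs,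
      abs_of_pos hh, mul_pow, real_inner_comm, hPdef]
    ring
  have e4 : ‖D - h • G‖ ^ 2 ≤ ((1 - h * μ) * ‖D‖) ^ 2 := by
    rw [e3]
    nlinarith [mul_le_mul_of_nonneg_left IP2 hh.le]
  have h5 : (0:ℝ) ≤ (1 - h * μ) * ‖D‖ :=
    mul_nonneg (by linarith) (norm_nonneg _)
  calc ‖D - h • G‖ = Real.sqrt (‖D - h • G‖ ^ 2) := by
        rw [Real.sqrt_sq (norm_nonneg _)]
    _ ≤ Real.sqrt (((1 - h * μ) * ‖D‖) ^ 2) := Real.sqrt_le_sqrt e4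
    _ = (1 - h * μ) * ‖D‖ := Real.sqrt_sq h5


lemma gradSum {ι : Type*} [Fintype ι] (f : ι → E → ℝ)
    (hdiff : ∀ i, Differentiable ℝ (f i)) (c : ℝ) (z : E) :
    HasGradientAt (fun z => c * ∑ i, f i z) (c • ∑ i, gradient (f i) z) z := by
  rw [hasGradientAt_iff_hasFDerivAt]
  have h1 : HasFDerivAt (fun z => ∑ i, f i z) (∑ i, fderiv ℝ (f i) z) z :=
    HasFDerivAt.fun_sum (fun i _ => ((hdiff i) z).hasFDerivAt)
  have h2 := h1.const_mul c
  refine h2.congr_fderiv ?_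
  rw [_root_.map_smul, map_sum]
  congr 1
  · refine Finset.sum_congr rfl (fun i _ => ?_)
    simp [gradient]

lemma sum_le_sqrt_card {n : ℕ} (a : Fin n → ℝ) (ha : ∀ i, 0 ≤ a i) :
    ∑ i, a i ≤ Real.sqrt n * Real.sqrt (∑ i, a i ^ 2) := by
  have h1 : (∑ i, a i) ^ 2 ≤ (n : ℝ) * ∑ i, a i ^ 2 := by
    have := sq_sum_le_card_mul_sum_sq (s := Finset.univ) (f := a)
    simpa using this
  calc ∑ i, a i = Real.sqrt ((∑ i, a i) ^ 2) :=
        (Real.sqrt_sq (Finset.sum_nonneg fun i _ => ha i)).symm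
    _ ≤ Real.sqrt ((n : ℝ) * ∑ i, a i ^ 2) := Real.sqrt_le_sqrt h1
    _ = Real.sqrt n * Real.sqrt (∑ i, a i ^ 2) := Real.sqrt_mul (by positivity) _

lemma weighted_cs {n : ℕ} (w a : Fin n → ℝ) (hw : ∀ i, 0 ≤ w i) (hw1 : ∑ i, w i = 1)
    (ha : ∀ i, 0 ≤ a i) :
    ∑ i, w i * a i ≤ Real.sqrt (∑ i, a i ^ 2) := by
  have hwle : ∀ i, w i ≤ 1 := by
    intro i
    rw [← hw1]
    exact Finset.single_le_sum (fun j _ => hw j) (Finset.mem_univ i)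
  have h1 : (∑ i, w i * a i) ^ 2 ≤ (∑ i, w i ^ 2) * ∑ i, a i ^ 2 :=
    Finset.sum_mul_sq_le_sq_mul_sq _ _ _
  have h2 : ∑ i, w i ^ 2 ≤ 1 := by
    rw [← hw1]
    exact Finset.sum_le_sum fun i _ => by nlinarith [hw i, hwle i]
  have h3 : (∑ i, w i * a i) ^ 2 ≤ ∑ i, a i ^ 2 := by
    have h4 : (0:ℝ) ≤ ∑ i, a i ^ 2 := Finset.sum_nonneg fun i _ => sq_nonneg _
    nlinarith
  calc ∑ i, w i * a i = Real.sqrt ((∑ i, w i * a i) ^ 2) :=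
        (Real.sqrt_sq (Finset.sum_nonneg fun i _ => mul_nonneg (hw i) (ha i))).symm
    _ ≤ Real.sqrt (∑ i, a i ^ 2) := Real.sqrt_le_sqrt h3

end Aux


/-- The block ℓ₂ norm on `(ℝ^p)^n`: `‖x‖ = (∑_i ‖x^i‖₂²)^{1/2}`. -/
noncomputable def bnorm {n p : ℕ} (x : Fin n → EuclideanSpace ℝ (Fin p)) : ℝ :=
  Real.sqrt (∑ i, ‖x i‖ ^ 2)

set_option maxHeartbeats 2000000 in
/-- One-step contraction of the optimality gap of the weighted average
(Lemma 6 of the paper). -/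
theorem stmt8 (n p C : ℕ) (hn : 1 ≤ n) (hp : 1 ≤ p) (hC : 1 ≤ C)
    (L μ : ℝ) (hμ : 0 < μ) (hμL : μ ≤ L)
    (η : ℝ) (hη : 0 < η) (hη' : η < 1 / (n * L))
    (f : Fin n → EuclideanSpace ℝ (Fin p) → ℝ)
    (hdiff : ∀ i, Differentiable ℝ (f i))
    (hlip : ∀ i z w, ‖gradient (f i) z - gradient (f i) w‖ ≤ L * ‖z - w‖)
    (F : EuclideanSpace ℝ (Fin p) → ℝ)
    (hF : F = fun z => (1 / (n : ℝ)) * ∑ i, f i z)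
    (hsc : ∀ z w : EuclideanSpace ℝ (Fin p),
      F w + (inner ℝ (gradient F w) (z - w) : ℝ) + μ / 2 * ‖z - w‖ ^ 2 ≤ F z)
    (xstar : EuclideanSpace ℝ (Fin p)) (hmin : ∀ z, F xstar ≤ F z)
    (A : Matrix (Fin n) (Fin n) ℝ)
    (hAnn : ∀ i j, 0 ≤ A i j) (hArow : ∀ i, ∑ j, A i j = 1)
    (φ φp : Fin n → ℝ)
    (hφst : (∀ i, 0 ≤ φ i) ∧ ∑ i, φ i = 1)
    (hφpst : (∀ i, 0 ≤ φp i) ∧ ∑ i, φp i = 1)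
    (hφabs : φ = Matrix.vecMul φp A)
    (v : Fin n → ℝ)
    (hv : ∀ i, 1 / (n : ℝ) ^ (n * C) ≤ v i ∧ v i ≤ 1)
    (x y stld : Fin n → EuclideanSpace ℝ (Fin p))
    (hsum : ∑ j, y j = ∑ j, gradient (f j) (x j))
    (hs : ∀ i, y i - v i • ∑ j, y j = v i • stld i)
    (xp : Fin n → EuclideanSpace ℝ (Fin p))
    (hxp : ∀ i, xp i = (∑ j, A i j • x j) - η • y i)
    (xbar xbarp : EuclideanSpace ℝ (Fin p))
    (hxbar : xbar = ∑ i, φ i • x i) (hxbarp : xbarp = ∑ i, φp i • xp i)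
    (xtld : Fin n → EuclideanSpace ℝ (Fin p)) (hxtld : ∀ i, xtld i = x i - xbar)
    (r rp : Fin n → EuclideanSpace ℝ (Fin p))
    (hr : ∀ i, r i = xbar - xstar) (hrp : ∀ i, rp i = xbarp - xstar) :
    bnorm rp ≤ η * n * L * bnorm xtld +
      (1 - η * μ / (n : ℝ) ^ (n * C - 1)) * bnorm r + η * Real.sqrt n * bnorm stld := by

  classical
  have hn0 : (0:ℝ) < n := by exact_mod_cast Nat.lt_of_lt_of_le Nat.zero_lt_one hn
  have hL0 : (0:ℝ) < L := lt_of_lt_of_le hμ hμL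
  have hnL : (0:ℝ) < (n:ℝ) * L := mul_pos hn0 hL0
  have hηnL : η * ((n:ℝ) * L) < 1 := by
    have h1 := (lt_div_iff₀ hnL).mp hη'
    linarith
  -- gradient facts about F
  have hFgrad : ∀ z, gradient F z = ((n:ℝ))⁻¹ • ∑ i, gradient (f i) z := by
    intro z
    have h1 := (gradSum f hdiff (1/(n:ℝ)) z).gradient
    rw [hF, h1, one_div]
  have hFdiff : Differentiable ℝ F := by
    intro z
    rw [hF]
    exact (gradSum f hdiff (1/(n:ℝ)) z).differentiableAt
  have hFlip : ∀ z w, ‖gradient F z - gradient F w‖ ≤ L * ‖z - w‖ := by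
    intro z w
    rw [hFgrad z, hFgrad w, ← smul_sub, ← Finset.sum_sub_distrib]
    have hb : ‖∑ i, (gradient (f i) z - gradient (f i) w)‖ ≤ (n:ℝ) * (L * ‖z - w‖) := by
      calc ‖∑ i, (gradient (f i) z - gradient (f i) w)‖
          ≤ ∑ i, ‖gradient (f i) z - gradient (f i) w‖ := norm_sum_le _ _
        _ ≤ ∑ _i : Fin n, L * ‖z - w‖ := Finset.sum_le_sum fun i _ => hlip i z w
        _ = (n:ℝ) * (L * ‖z - w‖) := by
            rw [Finset.sum_const, Finset.card_univ, Fintype.card_fin, nsmul_eq_mul]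
    calc ‖((n:ℝ))⁻¹ • ∑ i, (gradient (f i) z - gradient (f i) w)‖
        = ((n:ℝ))⁻¹ * ‖∑ i, (gradient (f i) z - gradient (f i) w)‖ := by
          rw [norm_smul, Real.norm_eq_abs, abs_of_pos (inv_pos.mpr hn0)]
      _ ≤ ((n:ℝ))⁻¹ * ((n:ℝ) * (L * ‖z - w‖)) :=
          mul_le_mul_of_nonneg_left hb (inv_pos.mpr hn0).le
      _ = L * ‖z - w‖ := by field_simp
  have hstar : gradient F xstar = 0 := by
    have hd := descentLemma F hFdiff L hFlip xstar (xstar - L⁻¹ • gradient F xstar)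
    have e1 : xstar - L⁻¹ • gradient F xstar - xstar = -(L⁻¹ • gradient F xstar) := by abel
    rw [e1, inner_neg_right, real_inner_smul_right, real_inner_self_eq_norm_sq,
      norm_neg, norm_smul, Real.norm_eq_abs, abs_of_pos (inv_pos.mpr hL0), mul_pow] at hd
    have hm := hmin (xstar - L⁻¹ • gradient F xstar)
    have hinv : L * L⁻¹ = 1 := mul_inv_cancel₀ hL0.ne'
    have hX : ‖gradient F xstar‖ ^ 2 ≤ 0 := by
      have hL' : (0:ℝ) < L⁻¹ := inv_pos.mpr hL0
      have h5 : L / 2 * (L⁻¹ ^ 2 * ‖gradient F xstar‖ ^ 2)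
          = 1 / 2 * (L⁻¹ * ‖gradient F xstar‖ ^ 2) := by
        field_simp
      have h6 : L⁻¹ * ‖gradient F xstar‖ ^ 2 ≤ 0 := by linarith [hd, hm, h5]
      nlinarith [h6, hL']
    have h0 : ‖gradient F xstar‖ = 0 := by
      nlinarith [norm_nonneg (gradient F xstar)]
    exact norm_eq_zero.mp h0
  have hsumgrad : ∀ z, ∑ j, gradient (f j) z = (n:ℝ) • gradient F z := by
    intro z
    rw [hFgrad, smul_smul, mul_inv_cancel₀ (ne_of_gt hn0), one_smul]
  -- vector decomposition
  obtain ⟨S, hS⟩ : ∃ S : EuclideanSpace ℝ (Fin p), S = ∑ j, y j := ⟨_, rfl⟩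
  obtain ⟨β, hβ⟩ : ∃ b : ℝ, b = ∑ i, φp i * v i := ⟨_, rfl⟩
  have hNpos : (0:ℝ) < (n:ℝ) ^ (n * C) := by positivity
  have hβ1 : 1 / (n:ℝ) ^ (n * C) ≤ β := by
    rw [hβ]
    calc 1 / (n:ℝ) ^ (n * C) = ∑ i, φp i * (1 / (n:ℝ) ^ (n * C)) := by
          rw [← Finset.sum_mul, hφpst.2, one_mul]
      _ ≤ ∑ i, φp i * v i :=
          Finset.sum_le_sum fun i _ => mul_le_mul_of_nonneg_left (hv i).1 (hφpst.1 i)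
  have hβpos : 0 < β := lt_of_lt_of_le (by positivity) hβ1
  have hβle : β ≤ 1 := by
    rw [hβ]
    calc ∑ i, φp i * v i ≤ ∑ i, φp i * 1 :=
          Finset.sum_le_sum fun i _ => mul_le_mul_of_nonneg_left (hv i).2 (hφpst.1 i)
      _ = 1 := by simp [hφpst.2]
  have hvnn : ∀ i, 0 ≤ v i := fun i => le_trans (by positivity) (hv i).1
  have hyi : ∀ i, y i = v i • S + v i • stld i := by
    intro i
    have h1 := hs i
    rw [sub_eq_iff_eq_add] at h1
    rw [← hS] at h1
    exact h1.trans (add_comm _ _)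
  obtain ⟨E1, hE1⟩ : ∃ e : EuclideanSpace ℝ (Fin p),
      e = ∑ j, (gradient (f j) (x j) - gradient (f j) xbar) := ⟨_, rfl⟩
  obtain ⟨T, hT⟩ : ∃ t : EuclideanSpace ℝ (Fin p),
      t = ∑ i, (φp i * v i) • stld i := ⟨_, rfl⟩
  have hstep3 : S = (n:ℝ) • gradient F xbar + E1 := by
    rw [hS, hsum, hE1, ← hsumgrad xbar, ← Finset.sum_add_distrib]
    exact Finset.sum_congr rfl fun j _ => by abel
  have hstep2 : ∑ i, φp i • y i = β • S + T := by
    calc ∑ i, φp i • y i = ∑ i, (φp i • (v i • S) + φp i • (v i • stld i)) := by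
          refine Finset.sum_congr rfl fun i _ => ?_
          rw [hyi i, smul_add]
      _ = (∑ i, φp i * v i) • S + T := by
          rw [Finset.sum_add_distrib]
          congr 1
          · rw [Finset.sum_smul]
            exact Finset.sum_congr rfl fun i _ => smul_smul _ _ _
          · rw [hT]
            exact Finset.sum_congr rfl fun i _ => smul_smul _ _ _
      _ = β • S + T := by rw [hβ]
  have hφj : ∀ j, (∑ i, φp i * A i j) = φ j := by
    intro j
    rw [hφabs]
    simp [Matrix.vecMul, dotProduct]
  have hdouble : ∑ i, φp i • ∑ j, A i j • x j = ∑ j, φ j • x j := by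
    calc ∑ i, φp i • ∑ j, A i j • x j = ∑ i, ∑ j, (φp i * A i j) • x j := by
          refine Finset.sum_congr rfl fun i _ => ?_
          rw [Finset.smul_sum]
          exact Finset.sum_congr rfl fun j _ => smul_smul _ _ _
      _ = ∑ j, ∑ i, (φp i * A i j) • x j := Finset.sum_comm
      _ = ∑ j, φ j • x j := by
          refine Finset.sum_congr rfl fun j _ => ?_
          rw [← Finset.sum_smul, hφj j]
  have hstep1 : xbarp = xbar - η • (β • S + T) := by
    rw [hxbarp, ← hstep2, hxbar, ← hdouble]
    calc ∑ i, φp i • xp i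
        = ∑ i, (φp i • ∑ j, A i j • x j - η • (φp i • y i)) := by
          refine Finset.sum_congr rfl fun i _ => ?_
          rw [hxp i, smul_sub, smul_comm]
      _ = ∑ i, φp i • ∑ j, A i j • x j - ∑ i, η • (φp i • y i) :=
          Finset.sum_sub_distrib _ _
      _ = ∑ i, φp i • ∑ j, A i j • x j - η • ∑ i, φp i • y i := by
          rw [← Finset.smul_sum]
  have hdecomp : xbarp - xstar =
      (xbar - (η * β * (n:ℝ)) • gradient F xbar - xstar) - ((η * β) • E1 + η • T) := by
    rw [hstep1, hstep3]
    module
  have hcontr := contraction F hFdiff L μ hμ hμL hFlip hsc xstar hstar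
    (η * β * (n:ℝ)) (by positivity)
    (by nlinarith [mul_nonneg (mul_nonneg hη.le hnL.le) (sub_nonneg.mpr hβle)]) xbar
  have htri : ‖xbarp - xstar‖ ≤
      ‖xbar - (η * β * (n:ℝ)) • gradient F xbar - xstar‖ + ((η * β) * ‖E1‖ + η * ‖T‖) := by
    rw [hdecomp]
    refine le_trans (norm_sub_le _ _) ?_
    have h2 : ‖(η * β) • E1 + η • T‖ ≤ (η * β) * ‖E1‖ + η * ‖T‖ := by
      refine le_trans (norm_add_le _ _) ?_
      rw [norm_smul, norm_smul, Real.norm_eq_abs, Real.norm_eq_abs,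
        abs_of_pos (by positivity : (0:ℝ) < η * β), abs_of_pos hη]
    linarith
  have hE1norm : ‖E1‖ ≤ L * (Real.sqrt n * bnorm xtld) := by
    rw [hE1]
    calc ‖∑ j, (gradient (f j) (x j) - gradient (f j) xbar)‖
        ≤ ∑ j, ‖gradient (f j) (x j) - gradient (f j) xbar‖ := norm_sum_le _ _
      _ ≤ ∑ j, L * ‖x j - xbar‖ := Finset.sum_le_sum fun j _ => hlip j (x j) xbar
      _ = L * ∑ j, ‖xtld j‖ := by
          rw [← Finset.mul_sum]
          congr 1
          exact Finset.sum_congr rfl fun j _ => by rw [hxtld j]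
      _ ≤ L * (Real.sqrt n * bnorm xtld) := by
          refine mul_le_mul_of_nonneg_left ?_ hL0.le
          have h3 := sum_le_sqrt_card (fun j => ‖xtld j‖) (fun j => norm_nonneg _)
          rw [bnorm]
          exact h3
  have hTnorm : ‖T‖ ≤ bnorm stld := by
    rw [hT]
    calc ‖∑ i, (φp i * v i) • stld i‖ ≤ ∑ i, ‖(φp i * v i) • stld i‖ := norm_sum_le _ _
      _ = ∑ i, (φp i * v i) * ‖stld i‖ := by
          refine Finset.sum_congr rfl fun i _ => ?_
          rw [norm_smul, Real.norm_eq_abs,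
            abs_of_nonneg (mul_nonneg (hφpst.1 i) (hvnn i))]
      _ ≤ ∑ i, φp i * ‖stld i‖ := by
          refine Finset.sum_le_sum fun i _ => ?_
          calc φp i * v i * ‖stld i‖ ≤ (φp i * 1) * ‖stld i‖ :=
                mul_le_mul_of_nonneg_right
                  (mul_le_mul_of_nonneg_left (hv i).2 (hφpst.1 i)) (norm_nonneg _)
            _ = φp i * ‖stld i‖ := by ring
      _ ≤ Real.sqrt (∑ i, ‖stld i‖ ^ 2) :=
          weighted_cs φp (fun i => ‖stld i‖) hφpst.1 hφpst.2 (fun i => norm_nonneg _)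
      _ = bnorm stld := by rw [bnorm]
  have hbconst : ∀ (w : Fin n → EuclideanSpace ℝ (Fin p)) (c : EuclideanSpace ℝ (Fin p)),
      (∀ i, w i = c) → bnorm w = Real.sqrt n * ‖c‖ := by
    intro w c hw
    rw [bnorm]
    have : ∑ i, ‖w i‖ ^ 2 = (n:ℝ) * ‖c‖ ^ 2 := by
      rw [Finset.sum_congr rfl fun i _ => by rw [hw i]]
      rw [Finset.sum_const, Finset.card_univ, Fintype.card_fin, nsmul_eq_mul]
    rw [this, Real.sqrt_mul (by positivity), Real.sqrt_sq (norm_nonneg _)]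
  have hbr : bnorm r = Real.sqrt n * ‖xbar - xstar‖ := hbconst r _ hr
  have hbrp : bnorm rp = Real.sqrt n * ‖xbarp - xstar‖ := hbconst rp _ hrp
  have hfinal : ‖xbarp - xstar‖ ≤ (1 - η * β * (n:ℝ) * μ) * ‖xbar - xstar‖
      + η * β * (L * (Real.sqrt n * bnorm xtld)) + η * bnorm stld := by
    have t1 := mul_le_mul_of_nonneg_left hE1norm (by positivity : (0:ℝ) ≤ η * β)
    have t2 := mul_le_mul_of_nonneg_left hTnorm hη.le
    linarith [htri, hcontr, t1, t2]
  have hsq : Real.sqrt n * Real.sqrt n = (n:ℝ) := Real.mul_self_sqrt hn0.le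
  have hNC : ((n:ℝ)) ^ (n * C - 1) * (n:ℝ) = ((n:ℝ)) ^ (n * C) := by
    rw [← pow_succ]
    congr 1
    have : 1 ≤ n * C := Nat.one_le_iff_ne_zero.mpr (by positivity)
    omega
  have hβN : 1 ≤ β * (n:ℝ) ^ (n * C) := by
    rw [div_le_iff₀ hNpos] at hβ1
    linarith
  have hexp : η * μ / ((n:ℝ) ^ (n * C - 1)) ≤ η * β * (n:ℝ) * μ := by
    rw [div_le_iff₀ (by positivity)]
    calc η * μ = η * μ * 1 := by ring
      _ ≤ η * μ * (β * (n:ℝ) ^ (n * C)) :=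
          mul_le_mul_of_nonneg_left hβN (by positivity)
      _ = η * β * (n:ℝ) * μ * ((n:ℝ)) ^ (n * C - 1) := by rw [← hNC]; ring
  have hB : 0 ≤ bnorm xtld := Real.sqrt_nonneg _
  have hs' : 0 ≤ bnorm stld := Real.sqrt_nonneg _
  have hc : (0:ℝ) ≤ Real.sqrt n * ‖xbar - xstar‖ := by positivity
  calc bnorm rp = Real.sqrt n * ‖xbarp - xstar‖ := hbrp
    _ ≤ Real.sqrt n * ((1 - η * β * (n:ℝ) * μ) * ‖xbar - xstar‖
        + η * β * (L * (Real.sqrt n * bnorm xtld)) + η * bnorm stld) :=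
        mul_le_mul_of_nonneg_left hfinal (Real.sqrt_nonneg _)
    _ = η * β * (Real.sqrt n * Real.sqrt n) * L * bnorm xtld
        + (1 - η * β * (n:ℝ) * μ) * (Real.sqrt n * ‖xbar - xstar‖)
        + η * Real.sqrt n * bnorm stld := by ring
    _ = η * β * (n:ℝ) * L * bnorm xtld
        + (1 - η * β * (n:ℝ) * μ) * (Real.sqrt n * ‖xbar - xstar‖)
        + η * Real.sqrt n * bnorm stld := by rw [hsq]
    _ ≤ η * (n:ℝ) * L * bnorm xtld + (1 - η * μ / (n:ℝ) ^ (n * C - 1)) * bnorm r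
        + η * Real.sqrt n * bnorm stld := by
        rw [hbr]
        have t1 : η * β * (n:ℝ) * L * bnorm xtld ≤ η * (n:ℝ) * L * bnorm xtld := by
          nlinarith [mul_nonneg (mul_nonneg (mul_nonneg hη.le hn0.le) hL0.le) hB,
            sub_nonneg.mpr hβle]
        have t2 : (1 - η * β * (n:ℝ) * μ) * (Real.sqrt n * ‖xbar - xstar‖)
            ≤ (1 - η * μ / (n:ℝ) ^ (n * C - 1)) * (Real.sqrt n * ‖xbar - xstar‖) :=
          mul_le_mul_of_nonneg_right (by linarith [hexp]) hc
        linarith
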